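/- For y > 0, I(y) ≤ sqrt(c₂ · sqrt(π/(2y)) · erf(sqrt(2y))) - Ei(-y)/4, where c₂ = ∫_0^1 (ψ(t+1) - log t)^2 dt and I(y) = ∫_0^∞ (ψ(t+1) - log t) e^{-y t^2} dt. -/

import Mathlib

open Real MeasureTheory Filter

/-- The digamma function: logarithmic derivative of the Gamma function. -/
noncomputable def digamma (x : ℝ) : ℝ := deriv (fun y => Real.log (Real.Gamma y)) x
/-- The error function. -/
noncomputable def erf (x : ℝ) : ℝ := (2 / Real.sqrt π) * ∫ t in (0:ℝ)..x, Real.exp (-t ^ 2)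
/-- The exponential integral. -/
noncomputable def Ei (x : ℝ) : ℝ := -∫ t in Set.Ioi (-x), Real.exp (-t) / t

lemma diffAt_logGamma {x : ℝ} (hx : 0 < x) :
    DifferentiableAt ℝ (fun y => Real.log (Real.Gamma y)) x := by
  refine (Real.differentiableAt_Gamma ?_).log (Real.Gamma_ne_zero ?_) <;>
    exact fun m => ne_of_gt (lt_of_le_of_lt (neg_nonpos.mpr m.cast_nonneg) hx)

lemma digamma_rec {x : ℝ} (hx : 0 < x) : digamma (x + 1) = digamma x + 1 / x := by
  unfold digamma
  rw [← deriv_comp_add_const, one_div, ← Real.deriv_log,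
    ← deriv_add (diffAt_logGamma hx) (Real.differentiableAt_log hx.ne')]
  apply Filter.EventuallyEq.deriv_eq
  filter_upwards [eventually_gt_nhds hx] with t ht
  rw [Real.Gamma_add_one ht.ne', Real.log_mul ht.ne' (Real.Gamma_pos_of_pos ht).ne', add_comm]
  rfl

lemma digamma_bounds {x : ℝ} (hx : 0 < x) :
    Real.log x ≤ digamma (x + 1) ∧ digamma (x + 1) ≤ Real.log (x + 1) := by
  have hc : ConvexOn ℝ (Set.Ioi 0) (fun y => Real.log (Real.Gamma y)) := by
    simpa [Function.comp_def] using Real.convexOn_log_Gamma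
  have hrec : ∀ t : ℝ, 0 < t →
      Real.log (Real.Gamma (t + 1)) = Real.log (Real.Gamma t) + Real.log t := by
    intro t ht
    rw [Real.Gamma_add_one ht.ne', Real.log_mul ht.ne' (Real.Gamma_pos_of_pos ht).ne', add_comm]
  constructor
  · have h := hc.slope_le_deriv (Set.mem_Ioi.mpr hx)
      (Set.mem_Ioi.mpr (by linarith : (0:ℝ) < x + 1)) (by linarith)
      (diffAt_logGamma (by linarith))
    rwa [slope_def_field, show x + 1 - x = (1:ℝ) by ring, div_one, hrec x hx,
      add_sub_cancel_left] at h
  · have h := hc.deriv_le_slope (Set.mem_Ioi.mpr (by linarith : (0:ℝ) < x + 1))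
      (Set.mem_Ioi.mpr (by linarith : (0:ℝ) < x + 2)) (by linarith)
      (diffAt_logGamma (by linarith))
    rwa [slope_def_field, show x + 2 - (x + 1) = (1:ℝ) by ring, div_one,
      show x + 2 = (x + 1) + 1 by ring, hrec (x + 1) (by linarith),
      add_sub_cancel_left] at h

lemma log_one_add_le {x : ℝ} (hx : 0 ≤ x) :
    Real.log (1 + x) ≤ x / 2 + x / (2 * (1 + x)) := by
  set h : ℝ → ℝ := fun u => u / 2 + u / (2 * (1 + u)) - Real.log (1 + u) with hh
  have hder : ∀ u : ℝ, 0 ≤ u → HasDerivAt h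
      (1 / 2 + (1 * (2 * (1 + u)) - u * 2) / (2 * (1 + u)) ^ 2 - (1 / (1 + u))) u := by
    intro u hu
    have h1 : (2 * (1 + u)) ≠ 0 := by positivity
    have h2 : (1 + u) ≠ 0 := by positivity
    have d1 : HasDerivAt (fun v : ℝ => v / 2) (1 / 2) u := by
      simpa using (hasDerivAt_id u).div_const 2
    have d2 : HasDerivAt (fun v : ℝ => v / (2 * (1 + v)))
        ((1 * (2 * (1 + u)) - u * 2) / (2 * (1 + u)) ^ 2) u := by
      have dc : HasDerivAt (fun v : ℝ => 2 * (1 + v)) 2 u := by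
        simpa using ((hasDerivAt_id u).const_add 1).const_mul 2
      exact (hasDerivAt_id u).div dc h1
    have d3 : HasDerivAt (fun v : ℝ => Real.log (1 + v)) (1 / (1 + u)) u := by
      have := (Real.hasDerivAt_log h2).comp u ((hasDerivAt_id u).const_add 1)
      simpa [one_div, Function.comp_def] using this
    exact (d1.add d2).sub d3
  have hmono : MonotoneOn h (Set.Ici 0) := by
    apply monotoneOn_of_deriv_nonneg (convex_Ici 0)
    · intro u hu
      exact (hder u hu).continuousAt.continuousWithinAt
    · intro u hu
      rw [interior_Ici] at hu
      exact (hder u (le_of_lt hu)).differentiableAt.differentiableWithinAt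
    · intro u hu
      rw [interior_Ici] at hu
      rw [(hder u hu.le).deriv]
      have h2 : (0:ℝ) < 1 + u := by linarith [(Set.mem_Ioi.mp hu).le]
      have key : 1 / 2 + (1 * (2 * (1 + u)) - u * 2) / (2 * (1 + u)) ^ 2 - 1 / (1 + u)
          = u ^ 2 / (2 * (1 + u) ^ 2) := by
        field_simp
        ring
      rw [key]
      positivity
  have h0 : h 0 = 0 := by simp [hh]
  have := hmono (Set.self_mem_Ici) (Set.mem_Ici.mpr hx) hx
  rw [h0] at this
  simpa [hh, sub_nonneg] using this

lemma fdig_twostep {s : ℝ} (hs : 0 < s) :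
    digamma (s + 1) - Real.log s ≤
      (digamma ((s + 1) + 1) - Real.log (s + 1)) + (1 / (2 * s) - 1 / (2 * (s + 1))) := by
  have hrec := digamma_rec (x := s + 1) (by linarith)
  have hx : (0:ℝ) ≤ 1 / s := by positivity
  have hlog := log_one_add_le hx
  have e1 : Real.log (1 + 1 / s) = Real.log (s + 1) - Real.log s := by
    rw [show (1:ℝ) + 1 / s = (s + 1) / s by field_simp, Real.log_div (by positivity) hs.ne']
  have e2 : (1 / s) / 2 + (1 / s) / (2 * (1 + 1 / s)) = 1 / (2 * s) + 1 / (2 * (s + 1)) := by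
    field_simp
    try norm_num
  rw [e1, e2] at hlog
  have haux : 1 / (2 * (s + 1)) + 1 / (2 * (s + 1)) = 1 / (s + 1) := by
    field_simp
    try norm_num
  linarith

lemma fdig_le_half_inv {t : ℝ} (ht : 0 < t) :
    digamma (t + 1) - Real.log t ≤ 1 / (2 * t) := by
  have key : ∀ n : ℕ, digamma (t + 1) - Real.log t ≤
      1 / (2 * t) - 1 / (2 * (t + n)) + (digamma ((t + n) + 1) - Real.log (t + n)) := by
    intro n
    induction n with
    | zero => simp
    | succ n ih =>
      have hs : (0:ℝ) < t + n := by positivity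
      have hstep := fdig_twostep hs
      have e : t + ((n:ℝ) + 1) = (t + n) + 1 := by ring
      push_cast
      rw [e]
      linarith
  have hupper : ∀ n : ℕ, digamma ((t + n) + 1) - Real.log (t + n) ≤ 1 / (t + n) := by
    intro n
    have hs : (0:ℝ) < t + n := by positivity
    have h2 := (digamma_bounds hs).2
    have h3 : Real.log ((t + n) + 1) - Real.log (t + n) ≤ 1 / (t + n) := by
      rw [← Real.log_div (by positivity) hs.ne']
      have h4 := Real.log_le_sub_one_of_pos (show (0:ℝ) < ((t+n)+1)/(t+n) by positivity)
      have h5 : ((t + n) + 1) / (t + n) - 1 = 1 / (t + n) := by field_simp; ring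
      linarith
    linarith
  have hn : ∀ n : ℕ, digamma (t + 1) - Real.log t ≤ 1 / (2 * t) + 1 / (t + n) := by
    intro n
    have h1 := key n
    have h2 := hupper n
    have h3 : (0:ℝ) ≤ 1 / (2 * (t + n)) := by positivity
    linarith
  have hlim : Tendsto (fun n : ℕ => 1 / (2 * t) + 1 / (t + (n:ℝ))) atTop (nhds (1 / (2 * t))) := by
    have h1 : Tendsto (fun n : ℕ => t + (n:ℝ)) atTop atTop :=
      tendsto_atTop_add_const_left _ t tendsto_natCast_atTop_atTop
    have h2 : Tendsto (fun n : ℕ => 1 / (t + (n:ℝ))) atTop (nhds 0) := by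
      simpa [one_div, Pi.inv_def] using h1.inv_tendsto_atTop
    simpa using tendsto_const_nhds.add h2
  exact ge_of_tendsto' hlim hn

theorem hardy_integral_upper_bound (y : ℝ) (hy : 0 < y) :
    (∫ t in Set.Ioi (0 : ℝ), (digamma (t + 1) - Real.log t) * Real.exp (-y * t ^ 2)) ≤
      Real.sqrt ((∫ t in Set.Ioo (0 : ℝ) 1, (digamma (t + 1) - Real.log t) ^ 2) *
          Real.sqrt (π / (2 * y)) * erf (Real.sqrt (2 * y))) - Ei (-y) / 4 := by
  set f : ℝ → ℝ := fun t => digamma (t + 1) - Real.log t with hf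
  set g : ℝ → ℝ := fun t => Real.exp (-y * t ^ 2) with hg
  have hmeasf : Measurable f :=
    ((measurable_deriv _).comp (measurable_id.add_const 1)).sub Real.measurable_log
  have hgcont : Continuous g := by
    rw [hg]; fun_prop
  have hgpos : ∀ t : ℝ, 0 < g t := fun t => Real.exp_pos _
  have hgle1 : ∀ t : ℝ, 0 ≤ t → g t ≤ 1 := by
    intro t ht
    rw [hg]
    simp only
    rw [show (1:ℝ) = Real.exp 0 by simp]
    exact Real.exp_le_exp.mpr (by nlinarith)
  -- pointwise bound on (0,1)
  have hfb : ∀ t ∈ Set.Ioo (0:ℝ) 1, 0 ≤ f t ∧ f t ≤ 5 * t ^ (-(1/4) : ℝ) := by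
    intro t ht
    obtain ⟨ht0, ht1⟩ := ht
    obtain ⟨hlb, hub⟩ := digamma_bounds ht0
    have hp : (0:ℝ) < t ^ (-(1/4) : ℝ) := Real.rpow_pos_of_pos ht0 _
    have h1 : (1:ℝ) ≤ t ^ (-(1/4) : ℝ) :=
      Real.one_le_rpow_of_pos_of_le_one_of_nonpos ht0 ht1.le (by norm_num)
    constructor
    · simp only [hf]; linarith
    · have hlog2 : Real.log (t + 1) ≤ 1 := by
        have := Real.log_le_sub_one_of_pos (show (0:ℝ) < t + 1 by linarith)
        linarith
      have hlogt : -Real.log t ≤ 4 * t ^ (-(1/4) : ℝ) := by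
        have h2 : Real.log t⁻¹ ≤ (t⁻¹) ^ ((1:ℝ)/4) / (1/4) :=
          Real.log_le_rpow_div (by positivity) (by norm_num)
        have h3 : (t⁻¹) ^ ((1:ℝ)/4) = t ^ (-(1/4):ℝ) := by
          rw [Real.inv_rpow ht0.le, ← Real.rpow_neg ht0.le]
        rw [Real.log_inv, h3] at h2
        linarith
      have : f t ≤ Real.log (t + 1) - Real.log t := by simp only [hf]; linarith
      linarith
  -- integrable powers on Ioo 0 1
  have hpow : ∀ r : ℝ, -1 < r → IntegrableOn (fun t : ℝ => t ^ r) (Set.Ioo 0 1) := by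
    intro r hr
    exact (intervalIntegral.intervalIntegrable_rpow' hr).1.mono_set Set.Ioo_subset_Ioc_self
  -- integrability of f * g on Ioo 0 1
  have hIfg : IntegrableOn (fun t => f t * g t) (Set.Ioo 0 1) := by
    refine Integrable.mono' ((hpow (-(1/4)) (by norm_num)).const_mul 5)
      ((hmeasf.mul hgcont.measurable).aestronglyMeasurable) ?_
    rw [ae_restrict_iff' measurableSet_Ioo]
    filter_upwards with t ht
    obtain ⟨h0, h5⟩ := hfb t ht
    rw [Real.norm_eq_abs, abs_of_nonneg (mul_nonneg h0 (hgpos t).le)]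
    calc f t * g t ≤ f t * 1 := by
          exact mul_le_mul_of_nonneg_left (hgle1 t ht.1.le) h0
      _ ≤ 5 * t ^ (-(1/4):ℝ) := by rw [mul_one]; exact h5
  -- integrability of f^2 on Ioo 0 1
  have hIf2 : IntegrableOn (fun t => f t ^ 2) (Set.Ioo 0 1) := by
    refine Integrable.mono' ((hpow (-(1/2)) (by norm_num)).const_mul 25)
      ((hmeasf.pow_const 2).aestronglyMeasurable) ?_
    rw [ae_restrict_iff' measurableSet_Ioo]
    filter_upwards with t ht
    obtain ⟨h0, h5⟩ := hfb t ht
    rw [Real.norm_eq_abs, abs_of_nonneg (by positivity : (0:ℝ) ≤ f t ^ 2)]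
    calc f t ^ 2 ≤ (5 * t ^ (-(1/4):ℝ)) ^ 2 := by
          apply pow_le_pow_left₀ h0 h5
      _ = 25 * t ^ (-(1/2):ℝ) := by
          rw [mul_pow, ← Real.rpow_natCast (t ^ (-(1/4):ℝ)) 2, ← Real.rpow_mul ht.1.le]
          norm_num
  -- integrability of g^2 on Ioo 0 1
  have hIg2 : IntegrableOn (fun t => g t ^ 2) (Set.Ioo 0 1) :=
    (Continuous.integrableOn_Ioc (by continuity)).mono_set Set.Ioo_subset_Ioc_self
  -- Cauchy-Schwarz on Ioo 0 1
  have hCS : (∫ t in Set.Ioo (0:ℝ) 1, f t * g t) ≤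
      Real.sqrt (∫ t in Set.Ioo (0:ℝ) 1, f t ^ 2) *
      Real.sqrt (∫ t in Set.Ioo (0:ℝ) 1, g t ^ 2) := by
    have hpq : (2:ℝ).HolderConjugate 2 := Real.HolderConjugate.two_two
    have h2 : ENNReal.ofReal (2:ℝ) = 2 := by
      rw [ENNReal.ofReal_ofNat]
    have hmf : MemLp f (ENNReal.ofReal (2:ℝ)) (volume.restrict (Set.Ioo 0 1)) := by
      rw [h2, memLp_two_iff_integrable_sq hmeasf.aestronglyMeasurable]
      exact hIf2
    have hmg : MemLp g (ENNReal.ofReal (2:ℝ)) (volume.restrict (Set.Ioo 0 1)) := by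
      rw [h2, memLp_two_iff_integrable_sq hgcont.aestronglyMeasurable]
      exact hIg2
    have hf0 : 0 ≤ᵐ[volume.restrict (Set.Ioo (0:ℝ) 1)] f := by
      filter_upwards [ae_restrict_mem measurableSet_Ioo] with t ht using (hfb t ht).1
    have hg0 : 0 ≤ᵐ[volume.restrict (Set.Ioo (0:ℝ) 1)] g :=
      Eventually.of_forall fun t => (hgpos t).le
    have h := integral_mul_le_Lp_mul_Lq_of_nonneg hpq hf0 hg0 hmf hmg
    have e1 : (∫ t in Set.Ioo (0:ℝ) 1, f t ^ (2:ℝ)) = ∫ t in Set.Ioo (0:ℝ) 1, f t ^ 2 := by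
      apply integral_congr_ae; filter_upwards with t
      rw [show (2:ℝ) = ((2:ℕ):ℝ) by norm_num, Real.rpow_natCast]
    have e2 : (∫ t in Set.Ioo (0:ℝ) 1, g t ^ (2:ℝ)) = ∫ t in Set.Ioo (0:ℝ) 1, g t ^ 2 := by
      apply integral_congr_ae; filter_upwards with t
      rw [show (2:ℝ) = ((2:ℕ):ℝ) by norm_num, Real.rpow_natCast]
    rw [e1, e2] at h
    calc (∫ t in Set.Ioo (0:ℝ) 1, f t * g t)
        ≤ (∫ t in Set.Ioo (0:ℝ) 1, f t ^ 2) ^ ((1:ℝ)/2) *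
          (∫ t in Set.Ioo (0:ℝ) 1, g t ^ 2) ^ ((1:ℝ)/2) := h
      _ = _ := by rw [Real.sqrt_eq_rpow, Real.sqrt_eq_rpow]
  -- Gaussian integral evaluation
  set c : ℝ := Real.sqrt (2 * y) with hc
  have h2y : (0:ℝ) < 2 * y := by linarith
  have hcpos : 0 < c := Real.sqrt_pos.mpr h2y
  have hEg : (∫ t in Set.Ioo (0:ℝ) 1, g t ^ 2) = c⁻¹ * (Real.sqrt π / 2 * erf c) := by
    have e0 : ∀ t ∈ Set.Ioo (0:ℝ) 1, g t ^ 2 = (fun u => Real.exp (-u ^ 2)) (c * t) := by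
      intro t _
      simp only [hg]
      have h1 : (c * t) ^ 2 = 2 * y * t ^ 2 := by
        rw [mul_pow, hc, Real.sq_sqrt h2y.le]
      rw [h1, show -(2 * y * t ^ 2) = ((2:ℕ):ℝ) * (-y * t ^ 2) by push_cast; ring,
        Real.exp_nat_mul]
    have herfI : (∫ u in (0:ℝ)..c, Real.exp (-u ^ 2)) = Real.sqrt π / 2 * erf c := by
      rw [erf]
      have hπ : Real.sqrt π ≠ 0 := (Real.sqrt_pos.mpr Real.pi_pos).ne'
      field_simp
    calc (∫ t in Set.Ioo (0:ℝ) 1, g t ^ 2)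
        = ∫ t in Set.Ioo (0:ℝ) 1, (fun u => Real.exp (-u ^ 2)) (c * t) :=
          setIntegral_congr_fun measurableSet_Ioo e0
      _ = ∫ t in (0:ℝ)..1, (fun u => Real.exp (-u ^ 2)) (c * t) := by
          rw [intervalIntegral.integral_of_le zero_le_one, integral_Ioc_eq_integral_Ioo]
      _ = c⁻¹ • ∫ u in (c * 0)..(c * 1), Real.exp (-u ^ 2) :=
          intervalIntegral.integral_comp_mul_left (fun u => Real.exp (-u ^ 2)) hcpos.ne'
      _ = c⁻¹ * (Real.sqrt π / 2 * erf c) := by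
          rw [mul_zero, mul_one, smul_eq_mul, herfI]
  have herfnn : 0 ≤ erf c := by
    rw [erf]
    have h1 : 0 ≤ ∫ u in (0:ℝ)..c, Real.exp (-u ^ 2) :=
      intervalIntegral.integral_nonneg hcpos.le (fun u _ => (Real.exp_pos _).le)
    positivity
  have hc2nn : 0 ≤ ∫ t in Set.Ioo (0:ℝ) 1, f t ^ 2 :=
    integral_nonneg fun t => sq_nonneg _
  have hA : Real.sqrt (π / (2 * y)) = Real.sqrt π * c⁻¹ := by
    rw [hc, Real.sqrt_div Real.pi_pos.le, div_eq_mul_inv]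
  have hEg_le : (∫ t in Set.Ioo (0:ℝ) 1, g t ^ 2) ≤ Real.sqrt (π / (2 * y)) * erf c := by
    rw [hEg, hA]
    have h1 : 0 ≤ Real.sqrt π * c⁻¹ * erf c := by positivity
    nlinarith [h1]
  have hIoo_le : (∫ t in Set.Ioo (0:ℝ) 1, f t * g t) ≤
      Real.sqrt ((∫ t in Set.Ioo (0:ℝ) 1, f t ^ 2) * Real.sqrt (π / (2 * y)) * erf c) := by
    refine hCS.trans ?_
    rw [← Real.sqrt_mul hc2nn, mul_assoc]
    exact Real.sqrt_le_sqrt (mul_le_mul_of_nonneg_left hEg_le hc2nn)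
  -- tail
  set B : ℝ → ℝ := fun t => (1 / (2 * t)) * Real.exp (-y * t ^ 2) with hB
  have hIexp : Integrable (fun t : ℝ => Real.exp (-y * t ^ 2)) := integrable_exp_neg_mul_sq hy
  have hfpos' : ∀ t : ℝ, 1 < t → 0 ≤ f t ∧ f t ≤ 1 / (2 * t) := by
    intro t ht
    have ht0 : (0:ℝ) < t := by linarith
    exact ⟨sub_nonneg.mpr (digamma_bounds ht0).1, fdig_le_half_inv ht0⟩
  have hhalf : ∀ t : ℝ, 1 < t → 1 / (2 * t) ≤ 1 := by
    intro t ht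
    rw [div_le_one (by linarith)]
    linarith
  have hIfgT : IntegrableOn (fun t => f t * g t) (Set.Ioi 1) := by
    refine Integrable.mono' hIexp.integrableOn
      ((hmeasf.mul hgcont.measurable).aestronglyMeasurable) ?_
    filter_upwards [ae_restrict_mem measurableSet_Ioi] with t ht
    obtain ⟨h0, h1⟩ := hfpos' t ht
    rw [Real.norm_eq_abs, abs_of_nonneg (mul_nonneg h0 (hgpos t).le)]
    calc f t * g t ≤ 1 * g t :=
        mul_le_mul_of_nonneg_right (h1.trans (hhalf t ht)) (hgpos t).le
      _ = Real.exp (-y * t ^ 2) := by rw [one_mul]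
  have hmeasB : AEStronglyMeasurable B (volume.restrict (Set.Ioi 1)) := by
    apply Measurable.aestronglyMeasurable
    rw [hB]
    exact ((measurable_const.div (measurable_const.mul measurable_id))).mul
      hgcont.measurable
  have hIB : IntegrableOn B (Set.Ioi 1) := by
    refine Integrable.mono' hIexp.integrableOn hmeasB ?_
    filter_upwards [ae_restrict_mem measurableSet_Ioi] with t ht
    have ht' : (1:ℝ) < t := ht
    have h1 : 0 < 1 / (2 * t) := by positivity
    rw [Real.norm_eq_abs, hB, abs_of_nonneg (by positivity)]
    calc 1 / (2 * t) * Real.exp (-y * t ^ 2) ≤ 1 * Real.exp (-y * t ^ 2) :=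
        mul_le_mul_of_nonneg_right (hhalf t ht') (Real.exp_pos _).le
      _ = Real.exp (-y * t ^ 2) := one_mul _
  have htail_le : (∫ t in Set.Ioi (1:ℝ), f t * g t) ≤ ∫ t in Set.Ioi (1:ℝ), B t :=
    setIntegral_mono_on hIfgT hIB measurableSet_Ioi (fun t ht => by
      obtain ⟨h0, h1⟩ := hfpos' t ht
      exact mul_le_mul_of_nonneg_right h1 (hgpos t).le)
  -- change of variables for the tail bound
  have hgcOn : ContinuousOn (fun u : ℝ => Real.exp (-u) / u) (Set.Ioi 0) := by
    apply ContinuousOn.div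
    · fun_prop
    · exact continuousOn_id
    · exact fun u hu => ne_of_gt hu
  have himg1 : (fun x : ℝ => y * x ^ 2) '' Set.Ioi 1 ⊆ Set.Ioi 0 := by
    rintro u ⟨x, hx, rfl⟩
    have hx1 : (1:ℝ) < x := hx
    have hx0 : (0:ℝ) < x := by linarith
    exact Set.mem_Ioi.mpr (mul_pos hy (by positivity))
  have himg2 : (fun x : ℝ => y * x ^ 2) '' Set.Ici 1 ⊆ Set.Ici y := by
    rintro u ⟨x, hx, rfl⟩
    have hx1 : (1:ℝ) ≤ x := hx
    have hx2 : (1:ℝ) ≤ x ^ 2 := by nlinarith [sq_nonneg (x - 1)]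
    have h0 := mul_le_mul_of_nonneg_left hx2 hy.le
    rw [mul_one] at h0
    exact Set.mem_Ici.mpr h0
  have hg1 : IntegrableOn (fun u : ℝ => Real.exp (-u) / u) (Set.Ici y) := by
    rw [integrableOn_Ici_iff_integrableOn_Ioi]
    refine Integrable.mono' (((exp_neg_integrableOn_Ioi y one_pos)).mul_const y⁻¹) ?_ ?_
    · exact ((hgcOn.mono (Set.Ioi_subset_Ioi hy.le)).aestronglyMeasurable measurableSet_Ioi)
    · filter_upwards [ae_restrict_mem measurableSet_Ioi] with u hu
      have hu' : y < u := hu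
      have hu0 : (0:ℝ) < u := lt_trans hy hu'
      rw [Real.norm_eq_abs, abs_of_nonneg (by positivity), neg_one_mul, ← div_eq_mul_inv]
      gcongr
  have hg2 : IntegrableOn
      (fun x => ((fun u : ℝ => Real.exp (-u) / u) ∘ (fun x : ℝ => y * x ^ 2)) x * (2 * y * x))
      (Set.Ici 1) := by
    refine Integrable.mono' (((integrable_exp_neg_mul_sq hy).const_mul 2).integrableOn) ?_ ?_
    · refine ContinuousOn.aestronglyMeasurable ?_ measurableSet_Ici
      refine ContinuousOn.mul ?_ (by fun_prop)
      refine ContinuousOn.comp hgcOn (by fun_prop) ?_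
      intro x hx
      have hx1 : (1:ℝ) ≤ x := hx
      have hx0 : (0:ℝ) < x := by linarith
      exact Set.mem_Ioi.mpr (mul_pos hy (by positivity))
    · filter_upwards [ae_restrict_mem measurableSet_Ici] with x hx
      have hx1 : (1:ℝ) ≤ x := hx
      have hx0 : (0:ℝ) < x := by linarith
      have he : ((fun u : ℝ => Real.exp (-u) / u) ∘ (fun x : ℝ => y * x ^ 2)) x * (2 * y * x)
          = 2 * Real.exp (-y * x ^ 2) / x := by
        simp only [Function.comp_apply, neg_mul]
        field_simp
      rw [Real.norm_eq_abs, he, abs_of_nonneg (by positivity)]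
      calc 2 * Real.exp (-y * x ^ 2) / x ≤ 2 * Real.exp (-y * x ^ 2) / 1 := by
            gcongr
        _ = 2 * Real.exp (-y * x ^ 2) := by rw [div_one]
  have hder : ∀ x ∈ Set.Ioi (1:ℝ),
      HasDerivWithinAt (fun x : ℝ => y * x ^ 2) (2 * y * x) (Set.Ioi x) x := by
    intro x hx
    have h := ((hasDerivAt_pow 2 x).const_mul y).hasDerivWithinAt (s := Set.Ioi x)
    refine h.congr_deriv ?_
    push_cast
    ring
  have hfcont : ContinuousOn (fun x : ℝ => y * x ^ 2) (Set.Ici 1) := by fun_prop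
  have hft : Tendsto (fun x : ℝ => y * x ^ 2) atTop atTop :=
    (tendsto_pow_atTop two_ne_zero).const_mul_atTop hy
  have hchg : (∫ x in Set.Ioi (1:ℝ),
        ((fun u : ℝ => Real.exp (-u) / u) ∘ (fun x : ℝ => y * x ^ 2)) x * (2 * y * x))
      = ∫ u in Set.Ioi (y * 1 ^ 2), Real.exp (-u) / u :=
    integral_comp_mul_deriv_Ioi hfcont hft hder (hgcOn.mono himg1) (hg1.mono_set himg2) hg2
  have hBeq : (∫ t in Set.Ioi (1:ℝ), B t) = (∫ s in Set.Ioi y, Real.exp (-s) / s) / 4 := by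
    have h4 : (∫ x in Set.Ioi (1:ℝ),
          ((fun u : ℝ => Real.exp (-u) / u) ∘ (fun x : ℝ => y * x ^ 2)) x * (2 * y * x))
        = ∫ x in Set.Ioi (1:ℝ), 4 * B x := by
      apply setIntegral_congr_fun measurableSet_Ioi
      intro x hx
      have hx1 : (1:ℝ) < x := hx
      have hx0 : (0:ℝ) < x := by linarith
      simp only [Function.comp_apply, hB, neg_mul]
      field_simp
      ring
    rw [h4, integral_const_mul, show y * 1 ^ 2 = y by norm_num] at hchg
    linarith
  have hIfgIoc : IntegrableOn (fun t => f t * g t) (Set.Ioc 0 1) :=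
    (integrableOn_Ioc_iff_integrableOn_Ioo).mpr hIfg
  have hsplit : (∫ t in Set.Ioi (0:ℝ), f t * g t)
      = (∫ t in Set.Ioo (0:ℝ) 1, f t * g t) + ∫ t in Set.Ioi (1:ℝ), f t * g t := by
    rw [← Set.Ioc_union_Ioi_eq_Ioi (zero_le_one), setIntegral_union (Set.Ioc_disjoint_Ioi le_rfl)
      measurableSet_Ioi hIfgIoc hIfgT, integral_Ioc_eq_integral_Ioo]
  have hEi : Ei (-y) = -∫ s in Set.Ioi y, Real.exp (-s) / s := by rw [Ei, neg_neg]
  show (∫ t in Set.Ioi (0:ℝ), f t * g t) ≤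
    Real.sqrt ((∫ t in Set.Ioo (0:ℝ) 1, f t ^ 2) * Real.sqrt (π / (2 * y)) * erf c) - Ei (-y) / 4
  calc (∫ t in Set.Ioi (0:ℝ), f t * g t)
      = (∫ t in Set.Ioo (0:ℝ) 1, f t * g t) + ∫ t in Set.Ioi (1:ℝ), f t * g t := hsplit
    _ ≤ Real.sqrt ((∫ t in Set.Ioo (0:ℝ) 1, f t ^ 2) * Real.sqrt (π / (2 * y)) * erf c)
        + (∫ s in Set.Ioi y, Real.exp (-s) / s) / 4 :=
        add_le_add hIoo_le (htail_le.trans (le_of_eq hBeq))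
    _ = _ := by rw [hEi]; ring
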